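/- arXiv:1608.02209 — 2 statements merged into one kernel-verified Lean document; each statement's English description precedes it below -/
import Mathlib

section
/- Every collection of edge probabilities π = {π^{(k)}_{[vu]} ∈ (0,1) : k = 1,…,K, 1 ≤ u < v ≤ V} admits a representation logit(π^{(k)}_{[vu]}) = μ + Σ_{r=1}^R x̄_{vr} x̄_{ur} + Σ_{h=1}^H x^{(k)}_{vh} x^{(k)}_{uh} for some μ ∈ ℝ, some dimensions R, H ∈ ℕ, shared coordinates x̄_{vr} ∈ ℝ, and layer-specific coordinates x^{(k)}_{vh} ∈ ℝ. -/
/-- Proposition 1 (static version): any collection of edge probabilities in (0,1)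
admits the bilinear logit factorization with a baseline, shared coordinates and
layer-specific coordinates. -/
theorem edge_probabilities_bilinear_representation (K V : ℕ) (hK : 1 ≤ K) (hV : 2 ≤ V)
    (π : Fin K → Fin V → Fin V → ℝ)
    (hπ : ∀ k v u, u < v → π k v u ∈ Set.Ioo (0 : ℝ) 1) :
    ∃ (μ : ℝ) (R H : ℕ) (xbar : Fin V → Fin R → ℝ) (x : Fin K → Fin V → Fin H → ℝ),
      ∀ k v u, u < v →
        Real.log (π k v u / (1 - π k v u)) =
          μ + (∑ r, xbar v r * xbar u r) + (∑ h, x k v h * x k u h) := by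
  set L : Fin K → Fin V → Fin V → ℝ :=
    fun k v u => Real.log (π k v u / (1 - π k v u)) with hL
  set g : Fin K → Fin V → Fin V × Fin V → ℝ :=
    fun k w p => if w = p.1 then L k p.2 p.1
      else if w = p.2 ∧ p.1 < p.2 then 1 else 0 with hg
  refine ⟨0, 0, V * V, fun _ _ => 0,
    fun k w h => g k w (finProdFinEquiv.symm h), ?_⟩
  intro k v u huv
  have hsum : (∑ h : Fin (V * V),
      g k v (finProdFinEquiv.symm h) * g k u (finProdFinEquiv.symm h))
      = ∑ p : Fin V × Fin V, g k v p * g k u p := by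
    exact Equiv.sum_comp finProdFinEquiv.symm (fun p => g k v p * g k u p)
  have hne : v ≠ u := (ne_of_gt huv)
  have hmain : (∑ p : Fin V × Fin V, g k v p * g k u p) = L k v u := by
    rw [Fintype.sum_eq_single ((u, v) : Fin V × Fin V)]
    · simp only [hg]
      rw [if_neg hne]
      simp [huv]
    · rintro ⟨i, j⟩ hp
      simp only [hg]
      by_cases h1 : v = i
      · by_cases h2 : u = i
        · exact absurd (h1.trans h2.symm) hne
        · rw [if_neg h2]
          by_cases h3 : u = j ∧ i < j
          · exfalso
            exact absurd (h1 ▸ h3.1 ▸ h3.2) (not_lt_of_gt huv)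
          · rw [if_neg h3]; ring
      · rw [if_neg h1]
        by_cases h3 : v = j ∧ i < j
        · by_cases h2 : u = i
          · exfalso
            apply hp
            rw [← h2, ← h3.1]
          · rw [if_neg h2]
            have h4 : ¬ (u = j ∧ i < j) := by
              rintro ⟨rfl, -⟩
              exact hne h3.1
            rw [if_neg h4]; ring
        · rw [if_neg h3]; ring
  rw [hsum, hmain]
  simp [hL]
end

section
/- Under the same setup with two layers k ≠ g, the covariance between z^{(k)}_{[vu]} and z^{(g)}_{[vu]} (same actor pair, different layers, same time) equals 1 + Σ_{r=1}^R τ_r^{-2}. -/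
open MeasureTheory ProbabilityTheory
open scoped ENNReal

noncomputable def cov {Ω : Type*} [MeasurableSpace Ω] (P : Measure Ω)
    (X Y : Ω → ℝ) : ℝ :=
  (∫ ω, X ω * Y ω ∂P) - (∫ ω, X ω ∂P) * (∫ ω, Y ω ∂P)

section Aux

variable {Ω ι : Type*} [MeasurableSpace Ω] {μ : Measure Ω}

lemma my_iIndepFun_ae_eq {β : ι → Type*} [m : ∀ i, MeasurableSpace (β i)]
    {f f' : ∀ i, Ω → β i} (h : iIndepFun f μ) (h' : ∀ i, f i =ᵐ[μ] f' i) :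
    iIndepFun f' μ := by
  rw [iIndepFun_iff_measure_inter_preimage_eq_mul] at h ⊢
  intro S sets H
  have hpre : ∀ i, (f i ⁻¹' sets i : Set Ω) =ᵐ[μ] (f' i ⁻¹' sets i : Set Ω) :=
    fun i => (h' i).fun_comp (sets i)
  have h1 : μ (⋂ i ∈ S, f' i ⁻¹' sets i) = μ (⋂ i ∈ S, f i ⁻¹' sets i) := by
    apply measure_congr
    exact Set.Finite.eventuallyEq_iInter S.finite_toSet fun i _ => (hpre i).symm
  rw [h1, h S H]
  exact Finset.prod_congr rfl fun i _ => measure_congr (hpre i)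

lemma my_integrable_mul_L2 {f g : Ω → ℝ} (hf : MemLp f 2 μ) (hg : MemLp g 2 μ) :
    Integrable (fun ω => f ω * g ω) μ := by
  have hb : Integrable (fun ω => f ω ^ 2 + g ω ^ 2) μ :=
    hf.integrable_sq.add hg.integrable_sq
  refine hb.mono' (hf.aestronglyMeasurable.mul hg.aestronglyMeasurable) ?_
  filter_upwards with ω
  simp only [Real.norm_eq_abs, abs_mul]
  nlinarith [sq_nonneg (|f ω| - |g ω|), sq_abs (f ω), sq_abs (g ω),
    abs_nonneg (f ω), abs_nonneg (g ω), sq_nonneg (f ω + g ω)]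

lemma my_integrable_pow4 {f : Ω → ℝ} (h : MemLp f 4 μ) :
    Integrable (fun x => f x ^ 4) μ := by
  have h4 := h.norm_rpow (by norm_num) (by norm_num)
  rw [memLp_one_iff_integrable] at h4
  refine h4.congr ?_
  filter_upwards with ω
  rw [show ((4 : ℝ≥0∞).toReal) = ((4 : ℕ) : ℝ) by norm_num, Real.rpow_natCast,
    Real.norm_eq_abs, pow_abs, abs_eq_self.mpr (by positivity)]

lemma my_memL2_mul {f g : Ω → ℝ} (hf : MemLp f 4 μ) (hg : MemLp g 4 μ) :
    MemLp (fun ω => f ω * g ω) 2 μ := by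
  have hm : AEStronglyMeasurable (fun ω => f ω * g ω) μ :=
    hf.aestronglyMeasurable.mul hg.aestronglyMeasurable
  rw [memLp_two_iff_integrable_sq hm]
  have hb : Integrable (fun ω => f ω ^ 4 + g ω ^ 4) μ :=
    (my_integrable_pow4 hf).add (my_integrable_pow4 hg)
  refine hb.mono' ((hm.mul hm).congr ?_) ?_
  · filter_upwards with ω
    simp only [Pi.mul_apply]
    ring
  · filter_upwards with ω
    simp only [Real.norm_eq_abs]
    rw [abs_eq_self.mpr (by positivity)]
    nlinarith [sq_nonneg (f ω ^ 2 - g ω ^ 2), sq_nonneg (f ω * g ω)]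

end Aux

/-- Covariance between the log-odds of the same actor pair in two different
layers equals `1 + ∑_r τ_r⁻²`: the shared coordinates are common to the two
layers while the layer-specific coordinates are independent between layers. -/
theorem logodds_cov_same_pair_different_layers
    {Ω : Type*} [MeasurableSpace Ω] (P : Measure Ω) [IsProbabilityMeasure P]
    (R H : ℕ) (τ : Fin R → ℝ)
    (f : (Unit ⊕ (Fin R × Bool) ⊕ (Bool × Fin H × Bool)) → Ω → ℝ)
    (hindep : iIndepFun f P)
    (hL4 : ∀ i, MemLp (f i) 4 P)
    (hmean : ∀ i, ∫ ω, f i ω ∂P = 0)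
    (hvarμ : variance (f (Sum.inl ())) P = 1)
    (hvarshared : ∀ r b, variance (f (Sum.inr (Sum.inl (r, b)))) P = (τ r)⁻¹)
    (z : Bool → Ω → ℝ)
    (hz : ∀ layer ω, z layer ω = f (Sum.inl ()) ω
      + (∑ r, f (Sum.inr (Sum.inl (r, true))) ω * f (Sum.inr (Sum.inl (r, false))) ω)
      + (∑ h, f (Sum.inr (Sum.inr (layer, h, true))) ω
            * f (Sum.inr (Sum.inr (layer, h, false))) ω)) :
    cov P (z true) (z false) = 1 + ∑ r, ((τ r)⁻¹) ^ 2 := by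
  classical
  -- measurable modifications
  set g : (Unit ⊕ (Fin R × Bool) ⊕ (Bool × Fin H × Bool)) → Ω → ℝ := fun i => ((hL4 i).aestronglyMeasurable).mk (f i) with hgdef
  have hae : ∀ i, f i =ᵐ[P] g i := fun i => (hL4 i).aestronglyMeasurable.ae_eq_mk
  have hgmeas : ∀ i, Measurable (g i) := fun i =>
    (hL4 i).aestronglyMeasurable.stronglyMeasurable_mk.measurable
  have hg4 : ∀ i, MemLp (g i) 4 P := fun i => (hL4 i).ae_eq (hae i)
  have hg2 : ∀ i, MemLp (g i) 2 P := fun i =>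
    (hg4 i).mono_exponent (by norm_num)
  have hgindep : iIndepFun g P :=
    my_iIndepFun_ae_eq hindep hae
  have hgmean : ∀ i, ∫ ω, g i ω ∂P = 0 := fun i => by
    rw [← integral_congr_ae (hae i)]; exact hmean i
  -- index notations
  set i0 : (Unit ⊕ (Fin R × Bool) ⊕ (Bool × Fin H × Bool)) := Sum.inl () with hi0
  set ia : Fin R → (Unit ⊕ (Fin R × Bool) ⊕ (Bool × Fin H × Bool)) := fun r => Sum.inr (Sum.inl (r, true)) with hia
  set ib : Fin R → (Unit ⊕ (Fin R × Bool) ⊕ (Bool × Fin H × Bool)) := fun r => Sum.inr (Sum.inl (r, false)) with hib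
  set ic : Bool → Fin H → (Unit ⊕ (Fin R × Bool) ⊕ (Bool × Fin H × Bool)) := fun L h => Sum.inr (Sum.inr (L, h, true)) with hic
  set id' : Bool → Fin H → (Unit ⊕ (Fin R × Bool) ⊕ (Bool × Fin H × Bool)) := fun L h => Sum.inr (Sum.inr (L, h, false)) with hid
  -- second moments
  have hsq_int : ∀ i, ∫ ω, g i ω ^ 2 ∂P = variance (f i) P := by
    intro i
    have h2 : MemLp (f i) 2 P := (hL4 i).mono_exponent (by norm_num)
    have hv := variance_eq_sub h2
    simp only [Pi.pow_apply, hmean i] at hv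
    norm_num at hv
    have hcongr : (∫ ω, f i ω ^ 2 ∂P) = ∫ ω, g i ω ^ 2 ∂P :=
      integral_congr_ae ((hae i).mono fun ω hω => by simp only [hω])
    rw [← hcongr, hv]
  -- zero integrals of pairwise products
  have hmul0 : ∀ i j : (Unit ⊕ (Fin R × Bool) ⊕ (Bool × Fin H × Bool)), i ≠ j → ∫ ω, g i ω * g j ω ∂P = 0 := by
    intro i j hij
    have h := (hgindep.indepFun hij).integral_mul_eq_mul_integral (hg4 i).aestronglyMeasurable
      (hg4 j).aestronglyMeasurable
    simp only [Pi.mul_apply] at h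
    rw [h,
      hgmean i, hgmean j, mul_zero]
  -- integral of g i * (g j * g k) with i distinct
  have h12 : ∀ i j k : (Unit ⊕ (Fin R × Bool) ⊕ (Bool × Fin H × Bool)), i ≠ j → i ≠ k →
      ∫ ω, g i ω * (g j ω * g k ω) ∂P = 0 := by
    intro i j k hij hik
    have hind := hgindep.indepFun_mul_right hgmeas i j k hij hik
    have h := hind.integral_mul_eq_mul_integral (hg4 i).aestronglyMeasurable
      ((hg4 j).aestronglyMeasurable.mul (hg4 k).aestronglyMeasurable)
    simp only [Pi.mul_apply] at h
    rw [h,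
      hgmean i, zero_mul]
  -- integral of product over 4 indices, cross-disjoint, factorizes
  have h22 : ∀ i j k l : (Unit ⊕ (Fin R × Bool) ⊕ (Bool × Fin H × Bool)), i ≠ k → i ≠ l → j ≠ k → j ≠ l →
      ∫ ω, (g i ω * g j ω) * (g k ω * g l ω) ∂P
        = (∫ ω, g i ω * g j ω ∂P) * (∫ ω, g k ω * g l ω ∂P) := by
    intro i j k l hik hil hjk hjl
    have hind := hgindep.indepFun_mul_mul hgmeas i j k l hik hil hjk hjl
    have h := hind.integral_mul_eq_mul_integral ((hg4 i).aestronglyMeasurable.mul (hg4 j).aestronglyMeasurable)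
      ((hg4 k).aestronglyMeasurable.mul (hg4 l).aestronglyMeasurable)
    simpa only [Pi.mul_apply] using h
  have h40 : ∀ i j k l : (Unit ⊕ (Fin R × Bool) ⊕ (Bool × Fin H × Bool)), i ≠ j → i ≠ k → i ≠ l → j ≠ k → j ≠ l →
      ∫ ω, (g i ω * g j ω) * (g k ω * g l ω) ∂P = 0 := by
    intro i j k l hij hik hil hjk hjl
    rw [h22 i j k l hik hil hjk hjl, hmul0 i j hij, zero_mul]
  -- square term
  have hsq : ∀ i j : (Unit ⊕ (Fin R × Bool) ⊕ (Bool × Fin H × Bool)), i ≠ j →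
      ∫ ω, (g i ω * g j ω) * (g i ω * g j ω) ∂P
        = (∫ ω, g i ω ^ 2 ∂P) * (∫ ω, g j ω ^ 2 ∂P) := by
    intro i j hij
    have hind : IndepFun (fun ω => g i ω ^ 2) (fun ω => g j ω ^ 2) P :=
      (hgindep.indepFun hij).comp (measurable_id.pow_const 2) (measurable_id.pow_const 2)
    have h := hind.integral_mul_eq_mul_integral ((hg2 i).integrable_sq).aestronglyMeasurable
      ((hg2 j).integrable_sq).aestronglyMeasurable
    simp only [Pi.mul_apply] at h
    have hcongr : ∫ ω, (g i ω * g j ω) * (g i ω * g j ω) ∂P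
        = ∫ ω, g i ω ^ 2 * g j ω ^ 2 ∂P := by
      apply integral_congr_ae; filter_upwards with ω; ring
    rw [hcongr]
    exact h
  -- components
  set M : Ω → ℝ := g i0 with hM
  set S : Ω → ℝ := fun ω => ∑ r, g (ia r) ω * g (ib r) ω with hS
  set T : Bool → Ω → ℝ := fun L ω => ∑ h, g (ic L h) ω * g (id' L h) ω with hT
  -- ae identification of z with measurable version
  have haeall : ∀ᵐ ω ∂P, ∀ i : (Unit ⊕ (Fin R × Bool) ⊕ (Bool × Fin H × Bool)), f i ω = g i ω := by
    rw [ae_all_iff]; exact hae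
  have hzae : ∀ L, z L =ᵐ[P] fun ω => M ω + S ω + T L ω := by
    intro L
    filter_upwards [haeall] with ω hω
    simp only [hz, hω, hM, hS, hT, hi0, hia, hib, hic, hid]
  -- basic disequalities helpers are proven inline with `simp`
  -- integrability
  have iM2 : MemLp M 2 P := hg2 i0
  have iAB2 : ∀ r, MemLp (fun ω => g (ia r) ω * g (ib r) ω) 2 P :=
    fun r => my_memL2_mul (hg4 (ia r)) (hg4 (ib r))
  have iCD2 : ∀ L h, MemLp (fun ω => g (ic L h) ω * g (id' L h) ω) 2 P :=
    fun L h => my_memL2_mul (hg4 (ic L h)) (hg4 (id' L h))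
  have iM : Integrable M P := (hg4 i0).integrable (by norm_num)
  have iAB : ∀ r, Integrable (fun ω => g (ia r) ω * g (ib r) ω) P :=
    fun r => (iAB2 r).integrable (by norm_num)
  have iCD : ∀ L h, Integrable (fun ω => g (ic L h) ω * g (id' L h) ω) P :=
    fun L h => (iCD2 L h).integrable (by norm_num)
  have iS : Integrable S P := by
    rw [hS]; exact integrable_finset_sum _ fun r _ => iAB r
  have iT : ∀ L, Integrable (T L) P := by
    intro L; rw [hT]; exact integrable_finset_sum _ fun h _ => iCD L h
  -- means
  have hMmean : ∫ ω, M ω ∂P = 0 := hgmean i0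
  have hSmean : ∫ ω, S ω ∂P = 0 := by
    rw [hS, integral_finset_sum _ fun r _ => iAB r]
    refine Finset.sum_eq_zero fun r _ => hmul0 _ _ (by simp [hia, hib])
  have hTmean : ∀ L, ∫ ω, T L ω ∂P = 0 := by
    intro L
    rw [hT, integral_finset_sum _ fun h _ => iCD L h]
    refine Finset.sum_eq_zero fun h _ => hmul0 _ _ (by simp [hic, hid])
  have hZmean : ∀ L, ∫ ω, z L ω ∂P = 0 := by
    intro L
    have iMS' : Integrable (fun ω => M ω + S ω) P := iM.add iS
    rw [integral_congr_ae (hzae L), integral_add iMS' (iT L),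
      integral_add iM iS, hMmean, hSmean, hTmean L]
    ring
  -- now the product integral
  -- individual cross integrals
  have hMM : ∫ ω, M ω * M ω ∂P = 1 := by
    have : ∫ ω, M ω * M ω ∂P = ∫ ω, g i0 ω ^ 2 ∂P := by
      apply integral_congr_ae; filter_upwards with ω; rw [hM]; ring
    rw [this, hsq_int i0, hi0, hvarμ]
  have iMS : Integrable (fun ω => M ω * S ω) P := by
    have : (fun ω => M ω * S ω) = fun ω => ∑ r, M ω * (g (ia r) ω * g (ib r) ω) := by
      funext ω; rw [hS, Finset.mul_sum]
    rw [this]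
    exact integrable_finset_sum _ fun r _ => my_integrable_mul_L2 iM2 (iAB2 r)
  have hMS : ∫ ω, M ω * S ω ∂P = 0 := by
    have : (fun ω => M ω * S ω) = fun ω => ∑ r, M ω * (g (ia r) ω * g (ib r) ω) := by
      funext ω; rw [hS, Finset.mul_sum]
    rw [this, integral_finset_sum _ fun r _ =>
      my_integrable_mul_L2 iM2 (iAB2 r)]
    exact Finset.sum_eq_zero fun r _ => h12 _ _ _ (by simp [hi0, hia]) (by simp [hi0, hib])
  have iMT : ∀ L, Integrable (fun ω => M ω * T L ω) P := by
    intro L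
    have : (fun ω => M ω * T L ω) = fun ω => ∑ h, M ω * (g (ic L h) ω * g (id' L h) ω) := by
      funext ω; rw [hT, Finset.mul_sum]
    rw [this]
    exact integrable_finset_sum _ fun h _ => my_integrable_mul_L2 iM2 (iCD2 L h)
  have hMT : ∀ L, ∫ ω, M ω * T L ω ∂P = 0 := by
    intro L
    have : (fun ω => M ω * T L ω) = fun ω => ∑ h, M ω * (g (ic L h) ω * g (id' L h) ω) := by
      funext ω; rw [hT, Finset.mul_sum]
    rw [this, integral_finset_sum _ fun h _ => my_integrable_mul_L2 iM2 (iCD2 L h)]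
    exact Finset.sum_eq_zero fun h _ => h12 _ _ _ (by simp [hi0, hic]) (by simp [hi0, hid])
  have iSS : Integrable (fun ω => S ω * S ω) P := my_integrable_mul_L2
    (by rw [hS]; exact memLp_finsetSum _ fun r _ => iAB2 r)
    (by rw [hS]; exact memLp_finsetSum _ fun r _ => iAB2 r)
  have hSS : ∫ ω, S ω * S ω ∂P = ∑ r, ((τ r)⁻¹) ^ 2 := by
    have hexp : (fun ω => S ω * S ω)
        = fun ω => ∑ r, ∑ s, (g (ia r) ω * g (ib r) ω) * (g (ia s) ω * g (ib s) ω) := by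
      funext ω; rw [hS, Finset.sum_mul_sum]
    rw [hexp, integral_finset_sum _ fun r _ => integrable_finset_sum _ fun s _ =>
      my_integrable_mul_L2 (iAB2 r) (iAB2 s)]
    have : ∀ r : Fin R, ∫ ω, ∑ s, (g (ia r) ω * g (ib r) ω) * (g (ia s) ω * g (ib s) ω) ∂P
        = ((τ r)⁻¹) ^ 2 := by
      intro r
      rw [integral_finset_sum _ fun s _ => my_integrable_mul_L2 (iAB2 r) (iAB2 s)]
      have hterm : ∀ s : Fin R,
          ∫ ω, (g (ia r) ω * g (ib r) ω) * (g (ia s) ω * g (ib s) ω) ∂P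
            = if s = r then ((τ r)⁻¹) ^ 2 else 0 := by
        intro s
        by_cases hrs : s = r
        · subst hrs
          rw [if_pos rfl, hsq _ _ (by simp [hia, hib]), hsq_int, hsq_int, hia, hib,
            hvarshared s true, hvarshared s false]
          ring
        · have hrs' : r ≠ s := fun hh => hrs hh.symm
          rw [if_neg hrs,
            h40 _ _ _ _ (by simp [hia, hib]) (by simp [hia, hrs'])
              (by simp [hia, hib]) (by simp [hia, hib]) (by simp [hib, hrs'])]
      rw [Finset.sum_congr rfl fun s _ => hterm s, Finset.sum_ite_eq' Finset.univ r
        (fun _ => ((τ r)⁻¹) ^ 2)]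
      simp
    rw [Finset.sum_congr rfl fun r _ => this r]
  have iST : ∀ L, Integrable (fun ω => S ω * T L ω) P := fun L => my_integrable_mul_L2
    (by rw [hS]; exact memLp_finsetSum _ fun r _ => iAB2 r)
    (by rw [hT]; exact memLp_finsetSum _ fun h _ => iCD2 L h)
  have hST : ∀ L, ∫ ω, S ω * T L ω ∂P = 0 := by
    intro L
    have hexp : (fun ω => S ω * T L ω)
        = fun ω => ∑ r, ∑ h, (g (ia r) ω * g (ib r) ω) * (g (ic L h) ω * g (id' L h) ω) := by
      funext ω; rw [hS, hT, Finset.sum_mul_sum]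
    rw [hexp, integral_finset_sum _ fun r _ => integrable_finset_sum _ fun h _ =>
      my_integrable_mul_L2 (iAB2 r) (iCD2 L h)]
    refine Finset.sum_eq_zero fun r _ => ?_
    rw [integral_finset_sum _ fun h _ => my_integrable_mul_L2 (iAB2 r) (iCD2 L h)]
    exact Finset.sum_eq_zero fun h _ => h40 _ _ _ _ (by simp [hia, hib])
      (by simp [hia, hic]) (by simp [hia, hid]) (by simp [hib, hic]) (by simp [hib, hid])
  have iTT : Integrable (fun ω => T true ω * T false ω) P := my_integrable_mul_L2
    (by rw [hT]; exact memLp_finsetSum _ fun h _ => iCD2 true h)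
    (by rw [hT]; exact memLp_finsetSum _ fun h _ => iCD2 false h)
  have hTT : ∫ ω, T true ω * T false ω ∂P = 0 := by
    have hexp : (fun ω => T true ω * T false ω)
        = fun ω => ∑ h, ∑ h', (g (ic true h) ω * g (id' true h) ω)
            * (g (ic false h') ω * g (id' false h') ω) := by
      funext ω; rw [hT, Finset.sum_mul_sum]
    rw [hexp, integral_finset_sum _ fun h _ => integrable_finset_sum _ fun h' _ =>
      my_integrable_mul_L2 (iCD2 true h) (iCD2 false h')]
    refine Finset.sum_eq_zero fun h _ => ?_
    rw [integral_finset_sum _ fun h' _ => my_integrable_mul_L2 (iCD2 true h) (iCD2 false h')]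
    exact Finset.sum_eq_zero fun h' _ => h40 _ _ _ _ (by simp [hic, hid])
      (by simp [hic]) (by simp [hic, hid]) (by simp [hic, hid]) (by simp [hid])
  -- assemble
  have hprod : ∫ ω, z true ω * z false ω ∂P = 1 + ∑ r, ((τ r)⁻¹) ^ 2 := by
    have hcongr : (fun ω => z true ω * z false ω)
        =ᵐ[P] fun ω => (M ω + S ω + T true ω) * (M ω + S ω + T false ω) := by
      filter_upwards [hzae true, hzae false] with ω h1 h2
      rw [h1, h2]
    rw [integral_congr_ae hcongr]
    have hring : (fun ω => (M ω + S ω + T true ω) * (M ω + S ω + T false ω))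
        = fun ω => M ω * M ω + M ω * S ω + M ω * T false ω
            + M ω * S ω + S ω * S ω + S ω * T false ω
            + M ω * T true ω + S ω * T true ω + T true ω * T false ω := by
      funext ω; ring
    rw [hring]
    have iMM : Integrable (fun ω => M ω * M ω) P := my_integrable_mul_L2 iM2 iM2
    have p1 : Integrable (fun ω => M ω * M ω + M ω * S ω) P := iMM.add iMS
    have p2 : Integrable (fun ω => M ω * M ω + M ω * S ω + M ω * T false ω) P :=
      p1.add (iMT false)
    have p3 : Integrable (fun ω => M ω * M ω + M ω * S ω + M ω * T false ω + M ω * S ω) P :=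
      p2.add iMS
    have p4 : Integrable (fun ω => M ω * M ω + M ω * S ω + M ω * T false ω + M ω * S ω
        + S ω * S ω) P := p3.add iSS
    have p5 : Integrable (fun ω => M ω * M ω + M ω * S ω + M ω * T false ω + M ω * S ω
        + S ω * S ω + S ω * T false ω) P := p4.add (iST false)
    have p6 : Integrable (fun ω => M ω * M ω + M ω * S ω + M ω * T false ω + M ω * S ω
        + S ω * S ω + S ω * T false ω + M ω * T true ω) P := p5.add (iMT true)
    have p7 : Integrable (fun ω => M ω * M ω + M ω * S ω + M ω * T false ω + M ω * S ω
        + S ω * S ω + S ω * T false ω + M ω * T true ω + S ω * T true ω) P := p6.add (iST true)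
    rw [integral_add p7 iTT, integral_add p6 (iST true), integral_add p5 (iMT true),
      integral_add p4 (iST false), integral_add p3 iSS, integral_add p2 iMS,
      integral_add p1 (iMT false), integral_add iMM iMS,
      hMM, hMS, hMT false, hMT true, hSS, hST false, hST true, hTT]
    ring
  rw [cov, hprod, hZmean true, hZmean false]
  ring
end
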